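/- Let m ≥ 3 be an integer and let c ∈ (0,1), with the additional assumption c < 3/4 in case m = 3. Then the polynomial h(t) = t^m − c·t − (1−c) has exactly one complex root of the form r·e^{iθ} with r > 0 and θ ∈ (2π/m, 2π/(m−1)). Moreover, for this root, the polynomial g_θ(t) = (sin((m−1)θ)/sin θ)·t^m − (sin(mθ)/sin θ)·t^{m−1} + 1 has a unique positive real root, this root is less than 1, and it equals r. -/

import Mathlib

open Polynomial Real

noncomputable section

open Filter Set Topology

/-- The polynomial `h(t) = t^m - c·t - (1-c)` over `ℂ`. -/
def hpolyC (m : ℕ) (c : ℝ) : Polynomial ℂ :=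
  X ^ m - C (c : ℂ) * X - C ((1 : ℂ) - (c : ℂ))

/-- The polynomial `g_θ(t) = (sin((m-1)θ)/sin θ)·t^m - (sin(mθ)/sin θ)·t^{m-1} + 1`. -/
def gpoly (m : ℕ) (θ t : ℝ) : ℝ :=
  (Real.sin (((m : ℝ) - 1) * θ) / Real.sin θ) * t ^ m
    - (Real.sin ((m : ℝ) * θ) / Real.sin θ) * t ^ (m - 1) + 1

/- ## Sign lemmas -/

lemma aux_sin_pos (n : ℕ) (θ : ℝ) (hn : 2 ≤ n)
    (hθ : θ ∈ Set.Ioo (2*π/(n+1 : ℝ)) (2*π/(n:ℝ))) : 0 < Real.sin θ := by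
  obtain ⟨h1, h2⟩ := hθ
  have hπ := Real.pi_pos
  have hn' : (2:ℝ) ≤ n := by exact_mod_cast hn
  apply Real.sin_pos_of_pos_of_lt_pi
  · have : 0 < 2*π/(n+1:ℝ) := by positivity
    linarith
  · have : 2*π/(n:ℝ) ≤ π := by
      rw [div_le_iff₀ (by linarith)]
      nlinarith
    linarith

lemma aux_sin_m_pos (n : ℕ) (θ : ℝ) (hn : 2 ≤ n)
    (hθ : θ ∈ Set.Ioo (2*π/(n+1 : ℝ)) (2*π/(n:ℝ))) : 0 < Real.sin ((n+1 : ℝ) * θ) := by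
  obtain ⟨h1, h2⟩ := hθ
  have hπ := Real.pi_pos
  have hn' : (2:ℝ) ≤ n := by exact_mod_cast hn
  have h0 : (0:ℝ) < n := by linarith
  have hl : 2*π < (n+1:ℝ)*θ := by
    rw [div_lt_iff₀ (by linarith)] at h1
    linarith
  have hu : (n+1:ℝ)*θ < 3*π := by
    rw [lt_div_iff₀ h0] at h2
    have hθ0 : 0 < θ := by nlinarith
    have hθπ : θ < π := by nlinarith
    nlinarith
  have := Real.sin_pos_of_pos_of_lt_pi (x := (n+1:ℝ)*θ - 2*π) (by linarith) (by linarith)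
  rwa [Real.sin_sub_two_pi] at this

lemma aux_sin_n_neg (n : ℕ) (θ : ℝ) (hn : 2 ≤ n)
    (hθ : θ ∈ Set.Ioo (2*π/(n+1 : ℝ)) (2*π/(n:ℝ))) : Real.sin ((n : ℝ) * θ) < 0 := by
  obtain ⟨h1, h2⟩ := hθ
  have hπ := Real.pi_pos
  have hn' : (2:ℝ) ≤ n := by exact_mod_cast hn
  have h0 : (0:ℝ) < n := by linarith
  have hl : π < (n:ℝ)*θ := by
    rw [div_lt_iff₀ (by linarith)] at h1
    nlinarith
  have hu : (n:ℝ)*θ < 2*π := by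
    rw [lt_div_iff₀ h0] at h2
    linarith
  have := Real.sin_pos_of_pos_of_lt_pi (x := (n:ℝ)*θ - π) (by linarith) (by linarith)
  rw [Real.sin_sub_pi] at this
  linarith

/- ## Bridge between complex root and real equations -/

lemma aux_root_iff (n : ℕ) (c r θ : ℝ) (hs : Real.sin θ ≠ 0) :
    (hpolyC (n+1) c).IsRoot ((r:ℂ) * Complex.exp ((θ:ℂ) * Complex.I)) ↔
    (r^(n+1) * Real.sin ((n+1:ℝ)*θ) = c * r * Real.sin θ ∧
     r^(n+1) * Real.sin ((n:ℝ)*θ) = -((1-c) * Real.sin θ)) := by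
  have hzpow : ((r:ℂ) * Complex.exp ((θ:ℂ) * Complex.I))^(n+1)
      = ((r^(n+1) : ℝ):ℂ) * Complex.exp (((((n:ℝ)+1)*θ : ℝ):ℂ) * Complex.I) := by
    rw [mul_pow, ← Complex.exp_nat_mul]
    push_cast
    ring_nf
  rw [Polynomial.IsRoot, hpolyC]
  simp only [eval_sub, eval_mul, eval_pow, eval_X, eval_C]
  rw [hzpow, Complex.ext_iff]
  simp only [Complex.sub_re, Complex.sub_im, Complex.mul_re, Complex.mul_im,
    Complex.ofReal_re, Complex.ofReal_im, Complex.exp_ofReal_mul_I_re,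
    Complex.exp_ofReal_mul_I_im, Complex.one_re, Complex.one_im,
    Complex.zero_re, Complex.zero_im]
  constructor
  · rintro ⟨h1, h2⟩
    constructor
    · linarith [h2]
    · have e1 : Real.sin ((n+1:ℝ)*θ) = Real.sin ((n:ℝ)*θ) * Real.cos θ + Real.cos ((n:ℝ)*θ) * Real.sin θ := by
        rw [show ((n:ℝ)+1)*θ = (n:ℝ)*θ + θ by ring, Real.sin_add]
      have e2 : Real.cos ((n+1:ℝ)*θ) = Real.cos ((n:ℝ)*θ) * Real.cos θ - Real.sin ((n:ℝ)*θ) * Real.sin θ := by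
        rw [show ((n:ℝ)+1)*θ = (n:ℝ)*θ + θ by ring, Real.cos_add]
      have pyth := Real.sin_sq_add_cos_sq θ
      have key : (r^(n+1) * Real.sin ((n:ℝ)*θ) + (1-c) * Real.sin θ) * Real.sin θ = 0 := by
        rw [e1] at h2; rw [e2] at h1
        linear_combination (-(Real.sin θ^2)) * h1 + (Real.sin θ * Real.cos θ) * h2
          - (r^(n+1) * Real.sin ((n:ℝ)*θ) * Real.sin θ) * pyth
      rcases mul_eq_zero.1 key with h | h
      · linarith
      · exact absurd h hs
  · rintro ⟨h1, h2⟩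
    constructor
    · have e1 : Real.sin ((n+1:ℝ)*θ) = Real.sin ((n:ℝ)*θ) * Real.cos θ + Real.cos ((n:ℝ)*θ) * Real.sin θ := by
        rw [show ((n:ℝ)+1)*θ = (n:ℝ)*θ + θ by ring, Real.sin_add]
      have e2 : Real.cos ((n+1:ℝ)*θ) = Real.cos ((n:ℝ)*θ) * Real.cos θ - Real.sin ((n:ℝ)*θ) * Real.sin θ := by
        rw [show ((n:ℝ)+1)*θ = (n:ℝ)*θ + θ by ring, Real.cos_add]
      have pyth := Real.sin_sq_add_cos_sq θ
      have key : (r^(n+1) * Real.cos ((n+1:ℝ)*θ) - c*r*Real.cos θ - (1-c)) * Real.sin θ = 0 := by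
        rw [e1] at h1; rw [e2]
        linear_combination Real.cos θ * h1 - h2 - (r^(n+1) * Real.sin ((n:ℝ)*θ)) * pyth
      have := (mul_eq_zero.1 key).resolve_right hs
      linarith
    · linarith

/- ## g(1) < 0 numerator -/

lemma aux_gone (n : ℕ) (hn : 2 ≤ n) (θ : ℝ) (hθ : θ ∈ Set.Ioo (2*π/(n+1 : ℝ)) (2*π/(n:ℝ))) :
    Real.sin θ + Real.sin ((n:ℝ)*θ) - Real.sin ((n+1:ℝ)*θ) < 0 := by
  obtain ⟨h1, h2⟩ := hθ
  have hπ := Real.pi_pos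
  have hn' : (2:ℝ) ≤ n := by exact_mod_cast hn
  have h0 : (0:ℝ) < n := by linarith
  have hθ0 : 0 < θ := lt_trans (by positivity) h1
  have hθπ : θ < π := by
    rw [lt_div_iff₀ h0] at h2; nlinarith
  have hl : 2*π < (n+1:ℝ)*θ := by
    rw [div_lt_iff₀ (by linarith)] at h1; linarith
  have hu : (n:ℝ)*θ < 2*π := by
    rw [lt_div_iff₀ h0] at h2; linarith
  have hsplit : Real.sin ((n+1:ℝ)*θ) - Real.sin ((n:ℝ)*θ)
      = 2 * Real.sin (θ/2) * Real.cos (((2*(n:ℝ)+1)*θ/2)) := by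
    rw [Real.sin_sub_sin]
    ring_nf
  have hsin : Real.sin θ = 2 * Real.sin (θ/2) * Real.cos (θ/2) := by
    rw [show θ = 2*(θ/2) by ring, Real.sin_two_mul]
    ring_nf
  set φ := (2*(n:ℝ)+1)*θ/2 - 2*π with hφ
  have hcosφ : Real.cos ((2*(n:ℝ)+1)*θ/2) = Real.cos |φ| := by
    rw [Real.cos_abs, hφ, Real.cos_sub_two_pi]
  have habs : |φ| < θ/2 := by
    rw [abs_lt]; constructor <;> [skip; skip] <;> rw [hφ] <;> nlinarith
  have hkey : Real.cos (θ/2) < Real.cos |φ| :=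
    Real.cos_lt_cos_of_nonneg_of_le_pi (abs_nonneg φ) (by linarith) habs
  have hs2 : 0 < Real.sin (θ/2) :=
    Real.sin_pos_of_pos_of_lt_pi (by linarith) (by linarith)
  have : Real.sin ((n+1:ℝ)*θ) - Real.sin ((n:ℝ)*θ) > Real.sin θ := by
    rw [hsplit, hsin, hcosφ] at *
    nlinarith
  linarith

/- ## strict antitonicity of gpoly in t -/

lemma aux_g_anti (n : ℕ) (hn : 2 ≤ n) (θ : ℝ) (hA : Real.sin ((n:ℝ)*θ) / Real.sin θ < 0)
    (hB : 0 < Real.sin ((n+1:ℝ)*θ) / Real.sin θ) :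
    StrictAntiOn (gpoly (n+1) θ) (Set.Ici 0) := by
  intro a ha b hb hab
  simp only [Set.mem_Ici] at ha hb
  have hcast : ((n+1:ℕ):ℝ) - 1 = (n:ℝ) := by push_cast; ring
  have hm : (n+1) - 1 = n := rfl
  simp only [gpoly, hcast, hm]
  push_cast
  have hpow1 : a^(n+1) < b^(n+1) := pow_lt_pow_left₀ hab ha (by omega)
  have hpow2 : a^n ≤ b^n := pow_le_pow_left₀ ha (le_of_lt hab) n
  nlinarith

/- ## cot inequality and L function -/

lemma aux_cot_ineq (n : ℕ) (x : ℝ)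
    (hs : 0 < Real.sin x) (hs1 : 0 < Real.sin ((n+1:ℝ)*x)) (hsn : Real.sin ((n:ℝ)*x) < 0) :
    0 < ((n:ℝ)+1)^2 * (Real.cos ((n+1:ℝ)*x) / Real.sin ((n+1:ℝ)*x))
      - Real.cos x / Real.sin x
      - (n:ℝ)^2 * (Real.cos ((n:ℝ)*x) / Real.sin ((n:ℝ)*x)) := by
  set s1 := Real.sin ((n+1:ℝ)*x)
  set c1 := Real.cos ((n+1:ℝ)*x)
  set sn := Real.sin ((n:ℝ)*x)
  set cn := Real.cos ((n:ℝ)*x)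
  have hsx : Real.sin x = s1 * cn - c1 * sn := by
    rw [show x = ((n:ℝ)+1)*x - (n:ℝ)*x by ring, Real.sin_sub]
  have hcx : Real.cos x = c1 * cn + s1 * sn := by
    rw [show x = ((n:ℝ)+1)*x - (n:ℝ)*x by ring, Real.cos_sub]
  set E := ((n:ℝ)+1)^2 * (c1/s1) - Real.cos x / Real.sin x - (n:ℝ)^2 * (cn/sn) with hE
  have hsn' : sn ≠ 0 := ne_of_lt hsn
  have hs1' : s1 ≠ 0 := ne_of_gt hs1
  have hs' : Real.sin x ≠ 0 := ne_of_gt hs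
  have hP : 0 < s1 * (-sn) * Real.sin x :=
    mul_pos (mul_pos hs1 (by linarith)) hs
  have hident : E * (s1 * (-sn) * Real.sin x)
      = (((n:ℝ)+1) * c1 * (-sn) + (n:ℝ) * s1 * cn)^2 + (s1*sn)^2 := by
    rw [hE]
    field_simp
    rw [hsx, hcx]
    ring
  have h2 : 0 < E * (s1 * (-sn) * Real.sin x) := by
    rw [hident]
    have : (s1*sn)^2 > 0 := by
      have : s1*sn ≠ 0 := mul_ne_zero hs1' hsn'
      positivity
    nlinarith [sq_nonneg (((n:ℝ)+1) * c1 * (-sn) + (n:ℝ) * s1 * cn)]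
  by_contra h
  push_neg at h
  nlinarith

def Lfun (n : ℕ) (θ : ℝ) : ℝ :=
  ((n:ℝ)+1) * Real.log (Real.sin (((n:ℝ)+1)*θ))
    - (n:ℝ) * Real.log (-Real.sin ((n:ℝ)*θ)) - Real.log (Real.sin θ)

lemma aux_L_deriv (n : ℕ) (x : ℝ) (hs : 0 < Real.sin x) (hs1 : 0 < Real.sin (((n:ℝ)+1)*x))
    (hsn : Real.sin ((n:ℝ)*x) < 0) :
    HasDerivAt (Lfun n)
      (((n:ℝ)+1)^2 * (Real.cos (((n:ℝ)+1)*x) / Real.sin (((n:ℝ)+1)*x))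
        - Real.cos x / Real.sin x
        - (n:ℝ)^2 * (Real.cos ((n:ℝ)*x) / Real.sin ((n:ℝ)*x))) x := by
  have d1 : HasDerivAt (fun θ : ℝ => Real.sin (((n:ℝ)+1)*θ))
      (Real.cos (((n:ℝ)+1)*x) * ((n:ℝ)+1)) x := by
    simpa [Function.comp_def] using (Real.hasDerivAt_sin (((n:ℝ)+1)*x)).comp x
      ((hasDerivAt_id x).const_mul ((n:ℝ)+1))
  have d2 : HasDerivAt (fun θ : ℝ => -Real.sin ((n:ℝ)*θ))
      (-(Real.cos ((n:ℝ)*x) * (n:ℝ))) x := by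
    have := (Real.hasDerivAt_sin ((n:ℝ)*x)).comp x ((hasDerivAt_id x).const_mul (n:ℝ))
    simpa [Function.comp_def, Pi.neg_def] using this.neg
  have d3 : HasDerivAt Real.sin (Real.cos x) x := Real.hasDerivAt_sin x
  have l1 := (d1.log (ne_of_gt hs1)).const_mul ((n:ℝ)+1)
  have l2 := (d2.log (by simpa using ne_of_gt (neg_pos.2 hsn))).const_mul (n:ℝ)
  have l3 := d3.log (ne_of_gt hs)
  have : HasDerivAt (Lfun n) _ x := (l1.sub l2).sub l3
  convert this using 1
  have h1 : Real.sin (((n:ℝ)+1)*x) ≠ 0 := ne_of_gt hs1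
  have h2 : Real.sin ((n:ℝ)*x) ≠ 0 := ne_of_lt hsn
  have h3 : Real.sin x ≠ 0 := ne_of_gt hs
  field_simp
  ring

lemma aux_L_mono (n : ℕ) (hn : 2 ≤ n) :
    StrictMonoOn (Lfun n) (Set.Ioo (2*π/(n+1 : ℝ)) (2*π/(n:ℝ))) := by
  apply strictMonoOn_of_deriv_pos (convex_Ioo _ _)
  · intro x hx
    exact (aux_L_deriv n x (aux_sin_pos n x hn hx) (aux_sin_m_pos n x hn hx)
      (aux_sin_n_neg n x hn hx)).continuousAt.continuousWithinAt
  · intro x hx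
    rw [interior_Ioo] at hx
    rw [(aux_L_deriv n x (aux_sin_pos n x hn hx) (aux_sin_m_pos n x hn hx)
      (aux_sin_n_neg n x hn hx)).deriv]
    exact aux_cot_ineq n x (aux_sin_pos n x hn hx) (aux_sin_m_pos n x hn hx)
      (aux_sin_n_neg n x hn hx)


lemma aux_part2 (n : ℕ) (hn : 2 ≤ n) (c r θ : ℝ) (hc : c ∈ Set.Ioo (0:ℝ) 1) (hr : 0 < r)
    (hθ : θ ∈ Set.Ioo (2*π/(n+1 : ℝ)) (2*π/(n:ℝ)))
    (h1 : r^(n+1) * Real.sin ((n+1:ℝ)*θ) = c * r * Real.sin θ)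
    (h2 : r^(n+1) * Real.sin ((n:ℝ)*θ) = -((1-c) * Real.sin θ)) :
    gpoly (n+1) θ r = 0 ∧ r < 1 ∧ ∀ s : ℝ, 0 < s → gpoly (n+1) θ s = 0 → s = r := by
  obtain ⟨hc0, hc1⟩ := hc
  have hs := aux_sin_pos n θ hn hθ
  have hs1 := aux_sin_m_pos n θ hn hθ
  have hsn := aux_sin_n_neg n θ hn hθ
  have hA : Real.sin ((n:ℝ)*θ) / Real.sin θ < 0 := div_neg_of_neg_of_pos hsn hs
  have hB : 0 < Real.sin ((n+1:ℝ)*θ) / Real.sin θ := div_pos hs1 hs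
  have hanti := aux_g_anti n hn θ hA hB
  -- coefficient identities
  have hBr : (Real.sin ((n+1:ℝ)*θ) / Real.sin θ) * r^n = c := by
    have key : Real.sin ((n+1:ℝ)*θ) * r^n = c * Real.sin θ := by
      apply mul_left_cancel₀ (ne_of_gt hr)
      calc r * (Real.sin ((n+1:ℝ)*θ) * r^n) = r^(n+1) * Real.sin ((n+1:ℝ)*θ) := by ring
        _ = c * r * Real.sin θ := h1
        _ = r * (c * Real.sin θ) := by ring
    field_simp
    linarith [key]
  have hAr : (Real.sin ((n:ℝ)*θ) / Real.sin θ) * r^(n+1) = -(1-c) := by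
    field_simp
    linarith [h2]
  have hgr : gpoly (n+1) θ r = 0 := by
    have hcast : ((n+1:ℕ):ℝ) - 1 = (n:ℝ) := by push_cast; ring
    simp only [gpoly, hcast, Nat.add_sub_cancel]
    push_cast
    linarith [hAr, hBr]
  have hg1 : gpoly (n+1) θ 1 < 0 := by
    have hnum := aux_gone n hn θ hθ
    have hcast : ((n+1:ℕ):ℝ) - 1 = (n:ℝ) := by push_cast; ring
    simp only [gpoly, hcast, Nat.add_sub_cancel, one_pow, mul_one]
    push_cast
    have : (Real.sin θ + Real.sin ((n:ℝ)*θ) - Real.sin ((n+1:ℝ)*θ)) / Real.sin θ < 0 :=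
      div_neg_of_neg_of_pos hnum hs
    have heq : Real.sin ((n:ℝ)*θ) / Real.sin θ - Real.sin ((n+1:ℝ)*θ) / Real.sin θ + 1
        = (Real.sin θ + Real.sin ((n:ℝ)*θ) - Real.sin ((n+1:ℝ)*θ)) / Real.sin θ := by
      field_simp
      ring
    rw [heq]
    exact this
  have hr1 : r < 1 := by
    by_contra hle
    push_neg at hle
    rcases eq_or_lt_of_le hle with heq | hlt
    · rw [← heq] at hgr; linarith
    · have := hanti (Set.mem_Ici.2 (by norm_num)) (Set.mem_Ici.2 (by linarith)) hlt
      rw [hgr] at this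
      linarith
  refine ⟨hgr, hr1, fun s hspos hgs => ?_⟩
  exact hanti.injOn (Set.mem_Ici.2 hspos.le) (Set.mem_Ici.2 hr.le) (by rw [hgs, hgr])

lemma aux_logrel (n : ℕ) (hn : 2 ≤ n) (c r θ : ℝ) (hc : c ∈ Set.Ioo (0:ℝ) 1) (hr : 0 < r)
    (hθ : θ ∈ Set.Ioo (2*π/(n+1 : ℝ)) (2*π/(n:ℝ)))
    (h1 : r^(n+1) * Real.sin ((n+1:ℝ)*θ) = c * r * Real.sin θ)
    (h2 : r^(n+1) * Real.sin ((n:ℝ)*θ) = -((1-c) * Real.sin θ)) :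
    Lfun n θ = ((n:ℝ)+1) * Real.log c - (n:ℝ) * Real.log (1-c)
      ∧ r^n = c * Real.sin θ / Real.sin ((n+1:ℝ)*θ) := by
  obtain ⟨hc0, hc1⟩ := hc
  have hs := aux_sin_pos n θ hn hθ
  have hs1 := aux_sin_m_pos n θ hn hθ
  have hsn := aux_sin_n_neg n θ hn hθ
  have hrn : r^n * Real.sin ((n+1:ℝ)*θ) = c * Real.sin θ := by
    apply mul_left_cancel₀ (ne_of_gt hr)
    calc r * (r^n * Real.sin ((n+1:ℝ)*θ)) = r^(n+1) * Real.sin ((n+1:ℝ)*θ) := by ring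
      _ = c * r * Real.sin θ := h1
      _ = r * (c * Real.sin θ) := by ring
  have hrn1 : r^(n+1) * (-Real.sin ((n:ℝ)*θ)) = (1-c) * Real.sin θ := by linarith [h2]
  have e1 : (n:ℝ) * Real.log r + Real.log (Real.sin ((n+1:ℝ)*θ))
      = Real.log c + Real.log (Real.sin θ) := by
    have := congrArg Real.log hrn
    rwa [Real.log_mul (by positivity) (ne_of_gt hs1), Real.log_mul (ne_of_gt hc0) (ne_of_gt hs),
      Real.log_pow] at this
  have e2 : ((n:ℝ)+1) * Real.log r + Real.log (-Real.sin ((n:ℝ)*θ))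
      = Real.log (1-c) + Real.log (Real.sin θ) := by
    have := congrArg Real.log hrn1
    rw [Real.log_mul (by positivity) (by linarith), Real.log_mul (by linarith) (ne_of_gt hs),
      Real.log_pow] at this
    push_cast at this
    linarith
  constructor
  · unfold Lfun
    have key := sub_eq_sub_iff_sub_eq_sub.1 (congrArg₂ Sub.sub
      (congrArg (fun x => ((n:ℝ)+1) * x) e1) (congrArg (fun x => (n:ℝ) * x) e2))
    push_cast at *
    nlinarith [e1, e2]
  · rw [eq_div_iff (ne_of_gt hs1)]
    exact hrn


lemma aux_exists (n : ℕ) (hn : 2 ≤ n) (c : ℝ) (hc : c ∈ Set.Ioo (0:ℝ) 1)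
    (hc3 : n = 2 → c < 3/4) :
    ∃ r θ : ℝ, 0 < r ∧ θ ∈ Set.Ioo (2*π/(n+1 : ℝ)) (2*π/(n:ℝ)) ∧
      r^(n+1) * Real.sin ((n+1:ℝ)*θ) = c * r * Real.sin θ ∧
      r^(n+1) * Real.sin ((n:ℝ)*θ) = -((1-c) * Real.sin θ) := by
  obtain ⟨hc0, hc1⟩ := hc
  have hπ := Real.pi_pos
  have hn' : (2:ℝ) ≤ n := by exact_mod_cast hn
  have hn0 : (0:ℝ) < n := by linarith
  set a := 2*π/(n+1 : ℝ) with ha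
  set b := 2*π/(n:ℝ) with hb
  have hab : a < b := by
    rw [ha, hb, div_lt_div_iff₀ (by linarith) hn0]
    nlinarith
  set ρ : ℝ → ℝ := fun θ => (c * Real.sin θ / Real.sin ((n+1:ℝ)*θ)) ^ ((n:ℝ)⁻¹) with hρ
  set G : ℝ → ℝ := fun θ => (1-c) * Real.sin θ + (ρ θ)^(n+1) * Real.sin ((n:ℝ)*θ) with hG
  -- basic facts on I
  have hbase : ∀ θ ∈ Set.Ioo a b, 0 < c * Real.sin θ / Real.sin ((n+1:ℝ)*θ) := fun θ hθ =>
    div_pos (mul_pos hc0 (aux_sin_pos n θ hn hθ)) (aux_sin_m_pos n θ hn hθ)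
  have hρpos : ∀ θ ∈ Set.Ioo a b, 0 < ρ θ := fun θ hθ =>
    Real.rpow_pos_of_pos (hbase θ hθ) _
  have hρn : ∀ θ ∈ Set.Ioo a b, (ρ θ)^n = c * Real.sin θ / Real.sin ((n+1:ℝ)*θ) := by
    intro θ hθ
    rw [hρ]
    rw [← Real.rpow_natCast ((c * Real.sin θ / Real.sin ((n+1:ℝ)*θ)) ^ ((n:ℝ)⁻¹)) n,
      ← Real.rpow_mul (le_of_lt (hbase θ hθ)), inv_mul_cancel₀ (by positivity), Real.rpow_one]
  have hE1 : ∀ θ ∈ Set.Ioo a b,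
      (ρ θ)^(n+1) * Real.sin ((n+1:ℝ)*θ) = c * (ρ θ) * Real.sin θ := by
    intro θ hθ
    have h1 : (ρ θ)^(n+1) = (c * Real.sin θ / Real.sin ((n+1:ℝ)*θ)) * ρ θ := by
      rw [pow_succ, hρn θ hθ]
    have hne : Real.sin ((n+1:ℝ)*θ) ≠ 0 := ne_of_gt (aux_sin_m_pos n θ hn hθ)
    rw [h1, div_mul_eq_mul_div, div_mul_cancel₀ _ hne]
    ring
  -- continuity of G on I
  have hcontG : ∀ θ, Real.sin ((n+1:ℝ)*θ) ≠ 0 → ContinuousAt G θ := by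
    intro θ hs1
    have hbc : ContinuousAt (fun θ => c * Real.sin θ / Real.sin ((n+1:ℝ)*θ)) θ := by
      apply ContinuousAt.div
      · exact (continuous_const.mul Real.continuous_sin).continuousAt
      · exact (Real.continuous_sin.comp (continuous_const.mul continuous_id)).continuousAt
      · exact hs1
    have hρc : ContinuousAt ρ θ := hbc.rpow_const (Or.inr (by positivity))
    exact ((continuous_const.mul Real.continuous_sin).continuousAt).add
      (((hρc.pow (n+1)).mul
        ((Real.continuous_sin.comp (continuous_const.mul continuous_id)).continuousAt)))
  have hcontGI : ContinuousOn G (Set.Ioo a b) := fun θ hθ =>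
    (hcontG θ (ne_of_gt (aux_sin_m_pos n θ hn hθ))).continuousWithinAt
  -- θ₂ : a point of I with G θ₂ > 0
  have hθ2 : ∃ θ2 ∈ Set.Ioo a b, 0 < G θ2 := by
    rcases eq_or_lt_of_le hn with hn2 | hn3
    · -- case n = 2
      subst hn2
      have hbπ : b = π := by rw [hb]; norm_num
      set H : ℝ → ℝ := fun θ =>
        ((c/(3 - 4*Real.sin θ^2)) ^ ((2:ℕ):ℝ)⁻¹)^(2+1) * (2*Real.cos θ) + (1-c) with hH
      have hGH : ∀ θ ∈ Set.Ioo a b, G θ = Real.sin θ * H θ := by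
        intro θ hθ
        have hsθ := aux_sin_pos 2 θ (le_refl 2) hθ
        have hs3 := aux_sin_m_pos 2 θ (le_refl 2) hθ
        have hsin3 : Real.sin ((((2:ℕ):ℝ)+1)*θ) = Real.sin θ * (3 - 4*Real.sin θ^2) := by
          push_cast
          rw [show ((2:ℝ)+1)*θ = 3*θ by ring, Real.sin_three_mul]
          ring
        have hfac : 0 < 3 - 4*Real.sin θ^2 := by
          have : 0 < Real.sin θ * (3 - 4*Real.sin θ^2) := by
            rw [← hsin3]; exact hs3
          nlinarith [this, hsθ]
        have hbase_eq : c * Real.sin θ / Real.sin ((((2:ℕ):ℝ)+1)*θ) = c/(3 - 4*Real.sin θ^2) := by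
          rw [hsin3, show c * Real.sin θ = Real.sin θ * c by ring,
            mul_div_mul_left _ _ (ne_of_gt hsθ)]
        have hρeq : ρ θ = (c/(3 - 4*Real.sin θ^2)) ^ ((2:ℕ):ℝ)⁻¹ := by
          simp only [hρ]
          rw [hbase_eq]
        have hsin2 : Real.sin (((2:ℕ):ℝ)*θ) = 2 * Real.sin θ * Real.cos θ := by
          push_cast
          rw [Real.sin_two_mul]
        rw [hG, hH]
        simp only
        rw [hρeq, hsin2]
        ring
      have hdenne : (3:ℝ) - 4*Real.sin π^2 ≠ 0 := by
        rw [Real.sin_pi]; norm_num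
      have hcontH : ContinuousAt H π := by
        apply ContinuousAt.add
        · apply ContinuousAt.mul
          · apply ContinuousAt.pow
            apply ContinuousAt.rpow_const
            · apply ContinuousAt.div continuousAt_const
              · exact (continuous_const.sub (continuous_const.mul
                  (Real.continuous_sin.pow 2))).continuousAt
              · exact hdenne
            · right; positivity
          · exact (continuous_const.mul Real.continuous_cos).continuousAt
        · exact continuousAt_const
      have hHπ : 0 < H π := by
        rw [hH]
        simp only [Real.sin_pi, Real.cos_pi]
        set u := (c/(3 - 4*(0:ℝ)^2)) ^ ((2:ℕ):ℝ)⁻¹ with hu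
        have hu' : u = (c/3) ^ ((2:ℕ):ℝ)⁻¹ := by rw [hu]; norm_num
        have hupos : 0 < u := by rw [hu']; exact Real.rpow_pos_of_pos (by positivity) _
        have hu2 : u^2 = c/3 := by
          rw [hu', ← Real.rpow_natCast ((c/3) ^ ((2:ℕ):ℝ)⁻¹) 2, ← Real.rpow_mul (by positivity),
            inv_mul_cancel₀ (by norm_num : ((2:ℕ):ℝ) ≠ 0), Real.rpow_one]
        have hult : u < 1/2 := by nlinarith [hc3 rfl]
        have hfact : 0 < (1-2*u)*(1+u)^2 := mul_pos (by linarith) (by positivity)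
        have h3 : u ^ (2+1) = u^3 := by norm_num
        rw [h3]
        nlinarith [hfact, hu2]
      have hev : ∀ᶠ θ in nhdsWithin b (Set.Iio b), 0 < H θ := by
        rw [hbπ]
        exact (hcontH.eventually (eventually_gt_nhds hHπ)).filter_mono nhdsWithin_le_nhds
      have hIl' : Set.Ioo a b ∈ nhdsWithin b (Set.Iio b) :=
        Ioo_mem_nhdsLT_of_mem ⟨hab, le_refl b⟩
      have hbb : (nhdsWithin b (Set.Iio b)).NeBot := by
        rw [hbπ]; infer_instance
      obtain ⟨θ2, hpos, hI⟩ := ((hev.and (Filter.eventually_of_mem hIl' fun θ hθ => hθ))).exists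
      exact ⟨θ2, hI, by rw [hGH θ2 hI]; exact mul_pos (aux_sin_pos 2 θ2 (le_refl 2) hI) hpos⟩
    · -- case 3 ≤ n
      have hn3' : (3:ℝ) ≤ n := by exact_mod_cast hn3
      have hsb : 0 < Real.sin b := by
        apply Real.sin_pos_of_pos_of_lt_pi
        · rw [hb]; positivity
        · rw [hb, div_lt_iff₀ hn0]; nlinarith
      have hs1b : Real.sin ((n+1:ℝ)*b) = Real.sin b := by
        have : (n+1:ℝ)*b = b + 2*π := by rw [hb]; field_simp; ring
        rw [this, Real.sin_add_two_pi]
      have hsnb : Real.sin ((n:ℝ)*b) = 0 := by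
        have : (n:ℝ)*b = 2*π := by rw [hb]; field_simp
        rw [this, Real.sin_two_pi]
      have hGb : 0 < G b := by
        rw [hG]
        simp only
        rw [hsnb]
        have := mul_pos (show (0:ℝ) < 1 - c by linarith) hsb
        nlinarith
      have hcontb : ContinuousAt G b := hcontG b (by rw [hs1b]; exact ne_of_gt hsb)
      have hev : ∀ᶠ θ in nhdsWithin b (Set.Iio b), 0 < G θ :=
        (hcontb.eventually (eventually_gt_nhds hGb)).filter_mono nhdsWithin_le_nhds
      have hIl' : Set.Ioo a b ∈ nhdsWithin b (Set.Iio b) :=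
        Ioo_mem_nhdsLT_of_mem ⟨hab, le_refl b⟩
      obtain ⟨θ2, hpos, hI⟩ := ((hev.and (Filter.eventually_of_mem hIl' fun θ hθ => hθ))).exists
      exact ⟨θ2, hI, hpos⟩
  obtain ⟨θ2, hθ2I, hθ2pos⟩ := hθ2
  -- θ₁ : a point of I below θ₂ with G θ₁ < 0
  have hθ1 : ∃ θ1 ∈ Set.Ioo a b, θ1 < θ2 ∧ G θ1 < 0 := by
    have haI0 : 0 < a := by rw [ha]; positivity
    have hsa : 0 < Real.sin a := by
      apply Real.sin_pos_of_pos_of_lt_pi haI0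
      rw [ha, div_lt_iff₀ (by linarith)]
      nlinarith
    have hsna : Real.sin ((n:ℝ)*a) < 0 := by
      have hna : (n:ℝ)*a = 2*π*n/(n+1) := by rw [ha]; field_simp
      have hl : π < (n:ℝ)*a := by
        rw [hna, lt_div_iff₀ (by linarith)]
        nlinarith
      have hu : (n:ℝ)*a < 2*π := by
        rw [hna, div_lt_iff₀ (by linarith)]
        nlinarith
      have := Real.sin_pos_of_pos_of_lt_pi (x := (n:ℝ)*a - π) (by linarith) (by linarith)
      rw [Real.sin_sub_pi] at this
      linarith
    have hs1a : Real.sin ((n+1:ℝ)*a) = 0 := by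
      have : (n+1:ℝ)*a = 2*π := by
        rw [ha, mul_div_cancel₀ _ (by linarith : (n:ℝ)+1 ≠ 0)]
      rw [this, Real.sin_two_pi]
    set l := nhdsWithin a (Set.Ioi a) with hl
    have hIl : Set.Ioo a b ∈ l := Ioo_mem_nhdsGT_of_mem ⟨le_refl a, hab⟩
    have hθ2l : Set.Iio θ2 ∈ l := mem_nhdsWithin_of_mem_nhds (Iio_mem_nhds hθ2I.1)
    have t1 : Tendsto (fun θ => c * Real.sin θ) l (𝓝 (c * Real.sin a)) :=
      ((continuous_const.mul Real.continuous_sin).continuousAt).tendsto.mono_left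
        nhdsWithin_le_nhds
    have ts1 : Tendsto (fun θ => Real.sin ((n+1:ℝ)*θ)) l (𝓝 0) := by
      rw [← hs1a]
      exact ((Real.continuous_sin.comp (continuous_const.mul continuous_id)).continuousAt).tendsto.mono_left
        nhdsWithin_le_nhds
    have ts1' : Tendsto (fun θ => Real.sin ((n+1:ℝ)*θ)) l (nhdsWithin 0 (Set.Ioi 0)) := by
      rw [tendsto_nhdsWithin_iff]
      exact ⟨ts1, Filter.eventually_of_mem hIl fun θ hθ =>
        Set.mem_Ioi.2 (aux_sin_m_pos n θ hn hθ)⟩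
    have tinv : Tendsto (fun θ => (Real.sin ((n+1:ℝ)*θ))⁻¹) l atTop :=
      ts1'.inv_tendsto_nhdsGT_zero
    have tbase : Tendsto (fun θ => c * Real.sin θ / Real.sin ((n+1:ℝ)*θ)) l atTop := by
      simp_rw [div_eq_mul_inv]
      exact t1.pos_mul_atTop (by positivity) tinv
    have tρ : Tendsto ρ l atTop := by
      rw [hρ]
      exact (tendsto_rpow_atTop (by positivity : (0:ℝ) < (n:ℝ)⁻¹)).comp tbase
    have tρpow : Tendsto (fun θ => (ρ θ)^(n+1)) l atTop :=
      (tendsto_pow_atTop (Nat.succ_ne_zero n)).comp tρ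
    have tsn : Tendsto (fun θ => Real.sin ((n:ℝ)*θ)) l (𝓝 (Real.sin ((n:ℝ)*a))) :=
      ((Real.continuous_sin.comp (continuous_const.mul continuous_id)).continuousAt).tendsto.mono_left
        nhdsWithin_le_nhds
    have tprod : Tendsto (fun θ => (ρ θ)^(n+1) * Real.sin ((n:ℝ)*θ)) l atBot :=
      tρpow.atTop_mul_neg hsna tsn
    have tconst : Tendsto (fun θ => (1-c) * Real.sin θ) l (𝓝 ((1-c) * Real.sin a)) :=
      ((continuous_const.mul Real.continuous_sin).continuousAt).tendsto.mono_left
        nhdsWithin_le_nhds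
    have tG : Tendsto G l atBot := by
      rw [hG]
      exact tconst.add_atBot tprod
    have evneg : ∀ᶠ θ in l, G θ < 0 := tG.eventually (eventually_lt_atBot 0)
    have := ((evneg.and (Filter.eventually_of_mem hIl fun θ hθ => hθ)).and
      (Filter.eventually_of_mem hθ2l fun θ hθ => hθ)).exists
    obtain ⟨θ1, ⟨hneg, hI⟩, hlt⟩ := this
    exact ⟨θ1, hI, hlt, hneg⟩
  obtain ⟨θ1, hθ1I, hθ12, hθ1neg⟩ := hθ1
  -- IVT
  have hsub : Set.Icc θ1 θ2 ⊆ Set.Ioo a b := fun x hx =>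
    ⟨lt_of_lt_of_le hθ1I.1 hx.1, lt_of_le_of_lt hx.2 hθ2I.2⟩
  have hzero : (0:ℝ) ∈ Set.Ioo (G θ1) (G θ2) := ⟨hθ1neg, hθ2pos⟩
  obtain ⟨θs, hθsmem, hGθs⟩ := intermediate_value_Ioo (le_of_lt hθ12) (hcontGI.mono hsub) hzero
  have hθsI : θs ∈ Set.Ioo a b := hsub ⟨le_of_lt hθsmem.1, le_of_lt hθsmem.2⟩
  refine ⟨ρ θs, θs, hρpos θs hθsI, hθsI, hE1 θs hθsI, ?_⟩
  have : G θs = 0 := hGθs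
  rw [hG] at this
  simp only at this
  linarith

/-- Let `m ≥ 3`, `c ∈ (0,1)` (with `c < 3/4` in case `m = 3`).  Then
`h(t) = t^m - c·t - (1-c)` has exactly one complex root of the form `r·e^{iθ}` with `r > 0`
and `θ ∈ (2π/m, 2π/(m-1))`; moreover for this root, `r` is the unique positive real root of
`g_θ` and `r < 1`. -/
theorem stmt_10 (m : ℕ) (hm : 3 ≤ m) (c : ℝ) (hc : c ∈ Set.Ioo (0 : ℝ) 1)
    (hc3 : m = 3 → c < 3 / 4) :
    (∃! p : ℝ × ℝ, 0 < p.1 ∧ p.2 ∈ Set.Ioo (2 * π / (m : ℝ)) (2 * π / ((m : ℝ) - 1)) ∧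
      (hpolyC m c).IsRoot ((p.1 : ℂ) * Complex.exp ((p.2 : ℂ) * Complex.I))) ∧
    (∀ r θ : ℝ, 0 < r → θ ∈ Set.Ioo (2 * π / (m : ℝ)) (2 * π / ((m : ℝ) - 1)) →
      (hpolyC m c).IsRoot ((r : ℂ) * Complex.exp ((θ : ℂ) * Complex.I)) →
      gpoly m θ r = 0 ∧ r < 1 ∧ ∀ s : ℝ, 0 < s → gpoly m θ s = 0 → s = r) := by
  obtain ⟨n, rfl⟩ : ∃ n, m = n + 1 := ⟨m - 1, by omega⟩
  have hn : 2 ≤ n := by omega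
  have hc3' : n = 2 → c < 3/4 := fun h => hc3 (by omega)
  have hset : Set.Ioo (2 * π / ((n+1 : ℕ) : ℝ)) (2 * π / (((n+1 : ℕ) : ℝ) - 1))
      = Set.Ioo (2*π/(n+1 : ℝ)) (2*π/(n:ℝ)) := by
    push_cast
    norm_num
  rw [hset]
  constructor
  · -- existence and uniqueness
    obtain ⟨r, θ, hr, hθ, h1, h2⟩ := aux_exists n hn c hc hc3'
    have hroot : (hpolyC (n+1) c).IsRoot ((r:ℂ) * Complex.exp ((θ:ℂ) * Complex.I)) :=
      (aux_root_iff n c r θ (ne_of_gt (aux_sin_pos n θ hn hθ))).2 ⟨h1, h2⟩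
    refine ⟨(r, θ), ⟨hr, hθ, hroot⟩, ?_⟩
    rintro ⟨r', θ'⟩ ⟨hr', hθ', hroot'⟩
    simp only at hr' hθ' hroot' ⊢
    obtain ⟨h1', h2'⟩ := (aux_root_iff n c r' θ' (ne_of_gt (aux_sin_pos n θ' hn hθ'))).1 hroot'
    obtain ⟨hL, hrn⟩ := aux_logrel n hn c r θ hc hr hθ h1 h2
    obtain ⟨hL', hrn'⟩ := aux_logrel n hn c r' θ' hc hr' hθ' h1' h2'
    have hθeq : θ' = θ := (aux_L_mono n hn).injOn hθ' hθ (by rw [hL, hL'])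
    have hreq : r' = r := by
      rw [hθeq] at hrn'
      have : r'^n = r^n := by rw [hrn, hrn']
      exact (pow_left_inj₀ hr'.le hr.le (by omega)).1 this
    exact Prod.ext hreq hθeq
  · -- second part
    intro r θ hr hθ hroot
    obtain ⟨h1, h2⟩ := (aux_root_iff n c r θ (ne_of_gt (aux_sin_pos n θ hn hθ))).1 hroot
    exact aux_part2 n hn c r θ hc hr hθ h1 h2

end
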